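/- Let μ be a Borel probability measure on ℝ and let a ∈ (0,1). Then for Lebesgue-almost every r ∈ ℝ, the series ∑_{n=0}^∞ μ([r − aⁿ, r + aⁿ]) converges. -/

import Mathlib

open MeasureTheory
open scoped ENNReal

lemma key_meas_int (μ : Measure ℝ) [IsProbabilityMeasure μ] (c : ℝ) (hc : 0 ≤ c) :
    Measurable (fun r => μ (Set.Icc (r - c) (r + c))) ∧
      ∫⁻ r, μ (Set.Icc (r - c) (r + c)) = ENNReal.ofReal (2 * c) := by
  set S : Set (ℝ × ℝ) := {p : ℝ × ℝ | p.2 - c ≤ p.1 ∧ p.1 ≤ p.2 + c} with hS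
  have hSmeas : MeasurableSet S := by
    have h1 : MeasurableSet {p : ℝ × ℝ | p.2 - c ≤ p.1} :=
      measurableSet_le (by fun_prop) (by fun_prop)
    have h2 : MeasurableSet {p : ℝ × ℝ | p.1 ≤ p.2 + c} :=
      measurableSet_le (by fun_prop) (by fun_prop)
    exact h1.inter h2
  set F : ℝ → ℝ → ℝ≥0∞ := fun x r => S.indicator 1 (x, r) with hF
  have hFmeas : Measurable (Function.uncurry F) := by
    have : Function.uncurry F = S.indicator 1 := rfl
    rw [this]
    exact Measurable.indicator measurable_const hSmeas
  have hrep : ∀ r, μ (Set.Icc (r - c) (r + c)) = ∫⁻ x, F x r ∂μ := by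
    intro r
    have : ∀ x, F x r = (Set.Icc (r - c) (r + c)).indicator 1 x := by
      intro x
      simp only [hF, Set.indicator_apply, hS, Set.mem_setOf_eq, Set.mem_Icc, Pi.one_apply]
    simp only [this]
    rw [lintegral_indicator_one measurableSet_Icc]
  constructor
  · have := Measurable.lintegral_prod_left (μ := μ) hFmeas
    simpa [← hrep] using this
  · calc ∫⁻ r, μ (Set.Icc (r - c) (r + c))
        = ∫⁻ r, ∫⁻ x, F x r ∂μ := by simp only [hrep]
      _ = ∫⁻ x, ∫⁻ r, F x r ∂volume ∂μ := (lintegral_lintegral_swap hFmeas.aemeasurable).symm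
      _ = ∫⁻ x, volume (Set.Icc (x - c) (x + c)) ∂μ := by
          apply lintegral_congr
          intro x
          have h2 : ∀ r, F x r = (Set.Icc (x - c) (x + c)).indicator 1 r := by
            intro r
            simp only [hF, Set.indicator_apply, hS, Set.mem_setOf_eq, Set.mem_Icc, Pi.one_apply]
            congr 1
            simp only [eq_iff_iff]
            constructor
            · rintro ⟨h1, h2⟩; constructor <;> linarith
            · rintro ⟨h1, h2⟩; constructor <;> linarith
          simp only [h2]
          rw [lintegral_indicator_one measurableSet_Icc]
      _ = ENNReal.ofReal (2 * c) := by
          simp [Real.volume_Icc]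
          ring_nf
          rw [ENNReal.ofReal_mul hc]
          norm_num
/-- Let `μ` be a Borel probability measure on `ℝ` and let `a ∈ (0,1)`.
Then for Lebesgue-almost every `r ∈ ℝ`, the series `∑ₙ μ([r − aⁿ, r + aⁿ])` converges. -/
theorem stmt_7 (μ : Measure ℝ) [IsProbabilityMeasure μ] (a : ℝ) (ha : a ∈ Set.Ioo (0:ℝ) 1) :
    ∀ᵐ r ∂(volume : Measure ℝ),
      Summable fun n : ℕ => (μ (Set.Icc (r - a ^ n) (r + a ^ n))).toReal := by
  obtain ⟨ha0, ha1⟩ := ha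
  have hmeas : ∀ n : ℕ, Measurable (fun r => μ (Set.Icc (r - a ^ n) (r + a ^ n))) :=
    fun n => (key_meas_int μ (a ^ n) (pow_nonneg ha0.le n)).1
  have hint : ∀ n : ℕ, ∫⁻ r, μ (Set.Icc (r - a ^ n) (r + a ^ n)) = ENNReal.ofReal (2 * a ^ n) :=
    fun n => (key_meas_int μ (a ^ n) (pow_nonneg ha0.le n)).2
  have hsum : Summable (fun n : ℕ => 2 * a ^ n) :=
    (summable_geometric_of_lt_one ha0.le ha1).mul_left 2
  have htot : ∫⁻ r, (∑' n : ℕ, μ (Set.Icc (r - a ^ n) (r + a ^ n))) ≠ ⊤ := by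
    rw [lintegral_tsum (fun n => (hmeas n).aemeasurable)]
    simp only [hint]
    rw [← ENNReal.ofReal_tsum_of_nonneg (fun n => by positivity) hsum]
    exact ENNReal.ofReal_ne_top
  have hae : ∀ᵐ r ∂(volume : Measure ℝ),
      (∑' n : ℕ, μ (Set.Icc (r - a ^ n) (r + a ^ n))) < ⊤ :=
    ae_lt_top (Measurable.ennreal_tsum hmeas) htot
  filter_upwards [hae] with r hr
  exact ENNReal.summable_toReal hr.ne
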